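/- A finite-dimensional p-envelope (G, [p], i) of a finite-dimensional Lie algebra L over a field of characteristic p > 0 is minimal if and only if C(G) ⊆ i(L), where C(G) is the center of G. -/

import Mathlib

set_option linter.unusedSectionVars false


open scoped TensorProduct

/-- Iterated adjoint action: `adIter z n w = (ad z)^n w`. -/
def adIter {L : Type*} [LieRing L] (z : L) : ℕ → L → L
  | 0, w => w
  | n+1, w => ⁅z, adIter z n w⁆

/-- A `p`-semilinear map between `F`-vector spaces. -/
def IsPSemilinear (p : ℕ) (F : Type*) [Field F] {V W : Type*}
    [AddCommGroup V] [Module F V] [AddCommGroup W] [Module F W] (f : V → W) : Prop :=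
  ∀ (a : F) (x y : V), f (a • x + y) = a ^ p • f x + f y

/-- `pm` is a `p`-mapping on the Lie algebra `L` over `F`. -/
structure IsPMap (p : ℕ) (F : Type*) [Field F] (L : Type*) [LieRing L] [LieAlgebra F L]
    (pm : L → L) : Prop where
  ad_pow : ∀ a x : L, ⁅pm a, x⁆ = adIter a p x
  smul_pow : ∀ (c : F) (a : L), pm (c • a) = c ^ p • pm a
  add_pow : ∀ a b : L, ∃ s : Fin (p - 1) → L,
    adIter ((Polynomial.X : Polynomial F) ⊗ₜ[F] a + (1 : Polynomial F) ⊗ₜ[F] b) (p - 1)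
        ((1 : Polynomial F) ⊗ₜ[F] a)
      = (∑ j : Fin (p - 1), ((j : ℕ) + 1) •
          (((Polynomial.X : Polynomial F) ^ (j : ℕ)) ⊗ₜ[F] s j)) ∧
    pm (a + b) = pm a + pm b + ∑ j : Fin (p - 1), s j

/-- `H` is a `p`-subalgebra w.r.t. the map `pm`. -/
def IsPSubalgebra (F : Type*) [Field F] {L : Type*} [LieRing L] [LieAlgebra F L]
    (pm : L → L) (H : LieSubalgebra F L) : Prop :=
  ∀ x ∈ H, pm x ∈ H

/-- The `p`-subalgebra generated by a set `S`. -/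
def pSpan (F : Type*) [Field F] {L : Type*} [LieRing L] [LieAlgebra F L]
    (pm : L → L) (S : Set L) : LieSubalgebra F L :=
  sInf {H : LieSubalgebra F L | IsPSubalgebra F pm H ∧ S ⊆ H}

/-- An element `x` is semisimple if it lies in the `p`-subalgebra generated by `pm x`. -/
def IsSemisimpleElt (F : Type*) [Field F] {L : Type*} [LieRing L] [LieAlgebra F L]
    (pm : L → L) (x : L) : Prop :=
  x ∈ pSpan F pm {pm x}

/-- An element is `p`-nilpotent if some iterate of the `p`-map kills it. -/
def IsPNilpotentElt {L : Type*} (pm : L → L) [Zero L] (x : L) : Prop :=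
  ∃ n : ℕ, pm^[n] x = 0

universe u

/-- A `p`-envelope of a Lie algebra `L`: a restricted Lie algebra together with an injective
Lie homomorphism from `L` whose image generates it as a `p`-subalgebra. -/
structure PEnvelope (p : ℕ) (F : Type u) [Field F] (L : Type u) [LieRing L]
    [LieAlgebra F L] where
  carrier : Type u
  [lieRing : LieRing carrier]
  [lieAlg : LieAlgebra F carrier]
  pm : carrier → carrier
  isPMap : IsPMap p F carrier pm
  incl : L →ₗ⁅F⁆ carrier
  injective : Function.Injective incl
  generates : pSpan F pm (Set.range incl) = ⊤

attribute [instance] PEnvelope.lieRing PEnvelope.lieAlg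

/-- A finite-dimensional `p`-envelope is minimal if its dimension is least among the
dimensions of all finite-dimensional `p`-envelopes of `L`. -/
def PEnvelope.IsMinimal {p : ℕ} {F : Type u} [Field F] {L : Type u} [LieRing L]
    [LieAlgebra F L] (E : PEnvelope p F L) : Prop :=
  FiniteDimensional F E.carrier ∧
    ∀ E' : PEnvelope p F L, FiniteDimensional F E'.carrier →
      Module.finrank F E.carrier ≤ Module.finrank F E'.carrier


section PSpan
variable {F : Type*} [Field F] {L : Type*} [LieRing L] [LieAlgebra F L] (pm : L → L)

theorem mem_pSpan_iff {S : Set L} {x : L} :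
    x ∈ pSpan F pm S ↔ ∀ H : LieSubalgebra F L, IsPSubalgebra F pm H → S ⊆ H → x ∈ H := by
  constructor
  · intro hx H h1 h2
    have := LieSubalgebra.coe_sInf (R := F) {H : LieSubalgebra F L | IsPSubalgebra F pm H ∧ S ⊆ H}
    have hx' : x ∈ (↑(pSpan F pm S) : Set L) := hx
    rw [pSpan, this] at hx'
    simp only [Set.mem_iInter] at hx'
    exact hx' H ⟨h1, h2⟩
  · intro h
    have := LieSubalgebra.coe_sInf (R := F) {H : LieSubalgebra F L | IsPSubalgebra F pm H ∧ S ⊆ H}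
    show x ∈ (↑(pSpan F pm S) : Set L)
    rw [pSpan, this]
    simp only [Set.mem_iInter]
    rintro H ⟨h1, h2⟩
    exact h H h1 h2

theorem subset_pSpan (S : Set L) : S ⊆ (pSpan F pm S : Set L) := by
  intro x hx; rw [SetLike.mem_coe, mem_pSpan_iff]; exact fun H _ h2 => h2 hx

theorem pSpan_le {S : Set L} {H : LieSubalgebra F L} (h1 : IsPSubalgebra F pm H)
    (h2 : S ⊆ H) : pSpan F pm S ≤ H := fun _x hx => (mem_pSpan_iff pm).1 hx H h1 h2

theorem isPSub_pSpan (S : Set L) : IsPSubalgebra F pm (pSpan F pm S) := by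
  intro x hx
  rw [mem_pSpan_iff] at hx ⊢
  exact fun H h1 h2 => h1 x (hx H h1 h2)

end PSpan

section AdIter
variable {L : Type*} [LieRing L]

theorem adIter_succ (z w : L) (n : ℕ) : adIter z (n+1) w = ⁅z, adIter z n w⁆ := rfl

theorem adIter_succ' (z w : L) (n : ℕ) : adIter z (n+1) w = adIter z n ⁅z, w⁆ := by
  induction n with
  | zero => rfl
  | succ n ih => rw [adIter_succ, ih, ← adIter_succ]

theorem adIter_zero_right (z : L) (n : ℕ) : adIter z n 0 = 0 := by
  induction n with
  | zero => rfl
  | succ n ih => rw [adIter_succ, ih, lie_zero]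

theorem adIter_eq_zero {z w : L} (h : ⁅z, w⁆ = 0) {n : ℕ} (hn : 1 ≤ n) : adIter z n w = 0 := by
  obtain ⟨m, rfl⟩ := Nat.exists_eq_add_of_le hn
  rw [add_comm, adIter_succ', h, adIter_zero_right]

end AdIter

section BC
variable {F : Type*} [Field F] {M : Type*} [LieRing M] [LieAlgebra F M]

theorem tlie_add (u a b : Polynomial F ⊗[F] M) : ⁅u, a + b⁆ = ⁅u, a⁆ + ⁅u, b⁆ := lie_add u a b
theorem tadd_lie (a b v : Polynomial F ⊗[F] M) : ⁅a + b, v⁆ = ⁅a, v⁆ + ⁅b, v⁆ := add_lie a b v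
theorem tlie_smul (c : Polynomial F) (u a : Polynomial F ⊗[F] M) : ⁅u, c • a⁆ = c • ⁅u, a⁆ := lie_smul c u a
theorem tsmul_lie (c : Polynomial F) (u a : Polynomial F ⊗[F] M) : ⁅c • u, a⁆ = c • ⁅u, a⁆ := smul_lie c u a
theorem tzero_lie (v : Polynomial F ⊗[F] M) : ⁅(0 : Polynomial F ⊗[F] M), v⁆ = 0 := zero_lie v
theorem tlie_zero (v : Polynomial F ⊗[F] M) : ⁅v, (0 : Polynomial F ⊗[F] M)⁆ = 0 := lie_zero v

theorem lie_mem_baseChange {H : LieSubalgebra F M} {u v : Polynomial F ⊗[F] M}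
    (hu : u ∈ (H : Submodule F M).baseChange (Polynomial F))
    (hv : v ∈ (H : Submodule F M).baseChange (Polynomial F)) :
    ⁅u, v⁆ ∈ (H : Submodule F M).baseChange (Polynomial F) := by
  rw [Submodule.baseChange_eq_span] at hu hv
  set S := (H : Submodule F M).baseChange (Polynomial F) with hS
  refine Submodule.span_induction (p := fun u _ => ⁅u, v⁆ ∈ S) ?_ ?_ ?_ ?_ hu
  · rintro _ ⟨x, hx, rfl⟩
    refine Submodule.span_induction (p := fun v _ => ⁅TensorProduct.mk F (Polynomial F) M 1 x, v⁆ ∈ S) ?_ ?_ ?_ ?_ hv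
    · rintro _ ⟨y, hy, rfl⟩
      simp only [TensorProduct.mk_apply, LieAlgebra.ExtendScalars.bracket_tmul, one_mul]
      exact Submodule.tmul_mem_baseChange_of_mem _ (H.lie_mem hx hy)
    · rw [tlie_zero]; exact S.zero_mem
    · intro a b _ _ ha hb; rw [tlie_add]; exact S.add_mem ha hb
    · intro a w _ hw; rw [tlie_smul]; exact S.smul_mem a hw
  · rw [tzero_lie]; exact S.zero_mem
  · intro a b _ _ ha hb; rw [tadd_lie]; exact S.add_mem ha hb
  · intro a w _ hw; rw [tsmul_lie]; exact S.smul_mem a hw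

theorem adIter_mem_baseChange {H : LieSubalgebra F M} {u v : Polynomial F ⊗[F] M}
    (hu : u ∈ (H : Submodule F M).baseChange (Polynomial F))
    (hv : v ∈ (H : Submodule F M).baseChange (Polynomial F)) (n : ℕ) :
    adIter u n v ∈ (H : Submodule F M).baseChange (Polynomial F) := by
  induction n with
  | zero => exact hv
  | succ n ih => exact lie_mem_baseChange hu ih

theorem lie_mem_baseChange_of_lie_le {R : Submodule F M} (hR : ∀ x y : M, ⁅x, y⁆ ∈ R)
    (u v : Polynomial F ⊗[F] M) : ⁅u, v⁆ ∈ R.baseChange (Polynomial F) := by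
  induction u using TensorProduct.induction_on with
  | zero => rw [tzero_lie]; exact Submodule.zero_mem _
  | tmul f x =>
    induction v using TensorProduct.induction_on with
    | zero => rw [tlie_zero]; exact Submodule.zero_mem _
    | tmul g y =>
      have : ⁅f ⊗ₜ[F] x, g ⊗ₜ[F] y⁆ = (f * g) ⊗ₜ[F] ⁅x, y⁆ :=
        LieAlgebra.ExtendScalars.bracket_tmul F (Polynomial F) M M f g x y
      rw [this]
      exact Submodule.tmul_mem_baseChange_of_mem _ (hR x y)
    | add a b ha hb => rw [tlie_add]; exact Submodule.add_mem _ ha hb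
  | add a b ha hb => rw [tadd_lie]; exact Submodule.add_mem _ ha hb

noncomputable def coeffMap (F : Type*) [Field F] {M : Type*} [AddCommGroup M] [Module F M]
    (j : ℕ) : Polynomial F ⊗[F] M →ₗ[F] M :=
  (TensorProduct.lid F M).toLinearMap ∘ₗ (LinearMap.rTensor M (Polynomial.lcoeff F j))

@[simp] theorem coeffMap_tmul {M : Type*} [AddCommGroup M] [Module F M] (j : ℕ)
    (f : Polynomial F) (x : M) :
    coeffMap F j (f ⊗ₜ[F] x) = f.coeff j • x := by
  simp [coeffMap, Polynomial.lcoeff_apply]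

theorem baseChange_le_range {M : Type*} [AddCommGroup M] [Module F M] (S : Submodule F M) :
    S.baseChange (Polynomial F) ≤ LinearMap.range (S.subtype.baseChange (Polynomial F)) := by
  rw [Submodule.baseChange_eq_span, Submodule.span_le]
  rintro _ ⟨x, hx, rfl⟩
  exact ⟨(1 : Polynomial F) ⊗ₜ[F] ⟨x, hx⟩, by simp⟩

theorem coeffMap_naturality {N M : Type*} [AddCommGroup N] [Module F N]
    [AddCommGroup M] [Module F M] (g : N →ₗ[F] M) (j : ℕ) (w : Polynomial F ⊗[F] N) :
    coeffMap F j (g.baseChange (Polynomial F) w) = g (coeffMap F j w) := by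
  induction w using TensorProduct.induction_on with
  | zero => simp
  | tmul f x => simp
  | add a b ha hb => simp only [map_add, ha, hb]

theorem coeffMap_mem {M : Type*} [AddCommGroup M] [Module F M] {S : Submodule F M}
    {u : Polynomial F ⊗[F] M} (hu : u ∈ S.baseChange (Polynomial F)) (j : ℕ) :
    coeffMap F j u ∈ S := by
  obtain ⟨w, rfl⟩ := baseChange_le_range S hu
  rw [coeffMap_naturality]
  exact (coeffMap F j w).2

end BC

section LieHomBC
variable {F : Type*} [Field F] {K : Type*} [LieRing K] [LieAlgebra F K]
  {M : Type*} [LieRing M] [LieAlgebra F M]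

theorem tbracket_tmul (a b : Polynomial F) (x y : M) :
    ⁅a ⊗ₜ[F] x, b ⊗ₜ[F] y⁆ = (a*b) ⊗ₜ[F] ⁅x, y⁆ :=
  LieAlgebra.ExtendScalars.bracket_tmul F (Polynomial F) M M a b x y

theorem baseChange_lieHom_lie (f : K →ₗ⁅F⁆ M) (u v : Polynomial F ⊗[F] K) :
    f.toLinearMap.baseChange (Polynomial F) ⁅u, v⁆ =
      ⁅f.toLinearMap.baseChange (Polynomial F) u, f.toLinearMap.baseChange (Polynomial F) v⁆ := by
  induction u using TensorProduct.induction_on with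
  | zero => rw [tzero_lie, map_zero, tzero_lie]
  | tmul a x =>
    induction v using TensorProduct.induction_on with
    | zero => rw [tlie_zero, map_zero, tlie_zero]
    | tmul b y =>
      rw [tbracket_tmul, LinearMap.baseChange_tmul, LinearMap.baseChange_tmul,
        LinearMap.baseChange_tmul, tbracket_tmul]
      simp
    | add v1 v2 h1 h2 =>
      rw [tlie_add, map_add, map_add, h1, h2, tlie_add]
  | add u1 u2 h1 h2 =>
    rw [tadd_lie, map_add, map_add, h1, h2, tadd_lie]

theorem baseChange_lieHom_adIter (f : K →ₗ⁅F⁆ M) (u v : Polynomial F ⊗[F] K) (n : ℕ) :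
    f.toLinearMap.baseChange (Polynomial F) (adIter u n v) =
      adIter (f.toLinearMap.baseChange (Polynomial F) u) n
        (f.toLinearMap.baseChange (Polynomial F) v) := by
  induction n with
  | zero => rfl
  | succ n ih =>
    show f.toLinearMap.baseChange (Polynomial F) ⁅u, adIter u n v⁆ =
      ⁅f.toLinearMap.baseChange (Polynomial F) u,
        adIter (f.toLinearMap.baseChange (Polynomial F) u) n
          (f.toLinearMap.baseChange (Polynomial F) v)⁆
    rw [baseChange_lieHom_lie, ih]

theorem baseChange_injective {f : K →ₗ⁅F⁆ M} (hf : Function.Injective f) :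
    Function.Injective (f.toLinearMap.baseChange (Polynomial F)) := by
  have : Function.Injective (f.toLinearMap.lTensor (Polynomial F)) :=
    Module.Flat.lTensor_preserves_injective_linearMap _ hf
  intro x y h
  apply this
  rw [← LinearMap.baseChange_eq_ltensor]
  exact h

theorem coeffMap_sum {m : ℕ} (s : Fin m → M) (k : Fin m) :
    coeffMap F (k : ℕ) (∑ j : Fin m, ((j : ℕ) + 1) •
        (((Polynomial.X : Polynomial F) ^ (j : ℕ)) ⊗ₜ[F] s j)) = ((k : ℕ) + 1) • s k := by
  rw [map_sum]
  have : ∀ j : Fin m, coeffMap F (k : ℕ)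
      (((j : ℕ) + 1) • (((Polynomial.X : Polynomial F) ^ (j : ℕ)) ⊗ₜ[F] s j))
      = if j = k then ((k : ℕ) + 1) • s k else 0 := by
    intro j
    rw [map_nsmul, coeffMap_tmul, Polynomial.coeff_X_pow]
    by_cases h : j = k
    · subst h; simp
    · have : ¬ (k : ℕ) = (j : ℕ) := fun hc => h (Fin.ext hc.symm)
      simp [this, h]
  rw [Finset.sum_congr rfl (fun j _ => this j), Finset.sum_ite_eq' Finset.univ k]
  simp

theorem mem_of_nsmul_mem {S : Submodule F M} {n : ℕ} {x : M} (hn : (n : F) ≠ 0)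
    (h : n • x ∈ S) : x ∈ S := by
  rw [← Nat.cast_smul_eq_nsmul F] at h
  have := S.smul_mem ((n : F)⁻¹) h
  rwa [smul_smul, inv_mul_cancel₀ hn, one_smul] at this

variable (p : ℕ) [Fact p.Prime] [CharP F p]

theorem cast_succ_ne_zero {m : ℕ} (k : Fin m) (hm : m ≤ p - 1) : (((k : ℕ) + 1 : ℕ) : F) ≠ 0 := by
  have hp : 1 ≤ p := (Fact.out : p.Prime).one_lt.le
  have h1 : (k : ℕ) + 1 < p := by
    have := k.2
    omega
  rw [Ne, CharP.cast_eq_zero_iff F p]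
  exact Nat.not_dvd_of_pos_of_lt (Nat.succ_pos _) h1

/-- The auxiliary elements in the Jacobson sum all lie in any subalgebra containing `a` and `b`. -/
theorem jacobson_mem {H : LieSubalgebra F M} {a b : M} (ha : a ∈ H) (hb : b ∈ H)
    {s : Fin (p - 1) → M}
    (hs : adIter ((Polynomial.X : Polynomial F) ⊗ₜ[F] a + (1 : Polynomial F) ⊗ₜ[F] b) (p - 1)
        ((1 : Polynomial F) ⊗ₜ[F] a)
      = (∑ j : Fin (p - 1), ((j : ℕ) + 1) •
          (((Polynomial.X : Polynomial F) ^ (j : ℕ)) ⊗ₜ[F] s j)))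
    (k : Fin (p - 1)) : s k ∈ H := by
  have hu : (Polynomial.X : Polynomial F) ⊗ₜ[F] a + (1 : Polynomial F) ⊗ₜ[F] b
      ∈ (H : Submodule F M).baseChange (Polynomial F) :=
    Submodule.add_mem _ (Submodule.tmul_mem_baseChange_of_mem _ ha)
      (Submodule.tmul_mem_baseChange_of_mem _ hb)
  have hv : (1 : Polynomial F) ⊗ₜ[F] a ∈ (H : Submodule F M).baseChange (Polynomial F) :=
    Submodule.tmul_mem_baseChange_of_mem _ ha
  have h1 := adIter_mem_baseChange hu hv (p - 1)
  rw [hs] at h1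
  have h2 := coeffMap_mem h1 (k : ℕ)
  rw [coeffMap_sum] at h2
  exact mem_of_nsmul_mem (cast_succ_ne_zero p k le_rfl) h2


/-- Variant of `jacobson_mem` where all brackets land in a given submodule. -/
theorem jacobson_mem_of_lie_le {R : Submodule F M} (hR : ∀ x y : M, ⁅x, y⁆ ∈ R)
    {a b : M} {s : Fin (p - 1) → M}
    (hs : adIter ((Polynomial.X : Polynomial F) ⊗ₜ[F] a + (1 : Polynomial F) ⊗ₜ[F] b) (p - 1)
        ((1 : Polynomial F) ⊗ₜ[F] a)
      = (∑ j : Fin (p - 1), ((j : ℕ) + 1) •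
          (((Polynomial.X : Polynomial F) ^ (j : ℕ)) ⊗ₜ[F] s j)))
    (k : Fin (p - 1)) : s k ∈ R := by
  have hp2 : 2 ≤ p := (Fact.out : p.Prime).two_le
  obtain ⟨m, hm⟩ : ∃ m, p - 1 = m + 1 := ⟨p - 2, by omega⟩
  have h1 : adIter ((Polynomial.X : Polynomial F) ⊗ₜ[F] a + (1 : Polynomial F) ⊗ₜ[F] b) (p - 1)
      ((1 : Polynomial F) ⊗ₜ[F] a) ∈ R.baseChange (Polynomial F) := by
    rw [hm, adIter_succ]
    exact lie_mem_baseChange_of_lie_le hR _ _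
  rw [hs] at h1
  have h2 := coeffMap_mem h1 (k : ℕ)
  rw [coeffMap_sum] at h2
  exact mem_of_nsmul_mem (cast_succ_ne_zero p k le_rfl) h2

/-- A `p`-map restricts to any `p`-subalgebra. -/
theorem isPMap_restrict {pm : M → M} (hpm : IsPMap p F M pm) {H : LieSubalgebra F M}
    (hH : IsPSubalgebra F pm H) :
    IsPMap p F H (fun x => (⟨pm x, hH x x.2⟩ : H)) := by
  have coe_adIter : ∀ (a x : H) (n : ℕ), ((adIter a n x : H) : M) = adIter (a : M) n (x : M) := by
    intro a x n
    induction n with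
    | zero => rfl
    | succ n ih => rw [adIter_succ, adIter_succ, LieSubalgebra.coe_bracket, ih]
  constructor
  · intro a x
    apply Subtype.ext
    rw [coe_adIter, LieSubalgebra.coe_bracket]
    exact hpm.ad_pow (a : M) (x : M)
  · intro c a
    apply Subtype.ext
    show pm (c • (a : M)) = c ^ p • pm (a : M)
    exact hpm.smul_pow c (a : M)
  · intro a b
    obtain ⟨s, hs1, hs2⟩ := hpm.add_pow (a : M) (b : M)
    have hmem : ∀ k : Fin (p - 1), s k ∈ H := jacobson_mem p a.2 b.2 hs1
    refine ⟨fun j => ⟨s j, hmem j⟩, ?_, ?_⟩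
    · set J := (H.incl.toLinearMap).baseChange (Polynomial F) with hJ
      apply baseChange_injective (f := H.incl) (fun _ _ h => Subtype.ext h)
      rw [baseChange_lieHom_adIter]
      have e1 : J ((Polynomial.X : Polynomial F) ⊗ₜ[F] a + (1 : Polynomial F) ⊗ₜ[F] b)
          = (Polynomial.X : Polynomial F) ⊗ₜ[F] (a : M) + (1 : Polynomial F) ⊗ₜ[F] (b : M) := by
        rw [hJ, map_add, LinearMap.baseChange_tmul, LinearMap.baseChange_tmul]; rfl
      have e2 : J ((1 : Polynomial F) ⊗ₜ[F] a) = (1 : Polynomial F) ⊗ₜ[F] (a : M) := by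
        rw [hJ, LinearMap.baseChange_tmul]; rfl
      have e3 : J (∑ j : Fin (p - 1), ((j : ℕ) + 1) •
          (((Polynomial.X : Polynomial F) ^ (j : ℕ)) ⊗ₜ[F] (⟨s j, hmem j⟩ : H)))
          = ∑ j : Fin (p - 1), ((j : ℕ) + 1) •
          (((Polynomial.X : Polynomial F) ^ (j : ℕ)) ⊗ₜ[F] s j) := by
        rw [hJ, map_sum]
        refine Finset.sum_congr rfl fun j _ => ?_
        rw [map_nsmul, LinearMap.baseChange_tmul]; rfl
      rw [e1, e2, e3, hs1]
    · apply Subtype.ext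
      show pm ((a : M) + (b : M)) = _
      rw [hs2]
      push_cast
      rfl

end LieHomBC

section PSpanRestrict
variable {F : Type*} [Field F] {M : Type*} [LieRing M] [LieAlgebra F M]

/-- Inside the `p`-span, the generating set still `p`-generates. -/
theorem pSpan_restrict_top (pm : M → M) (S : Set M) :
    pSpan F (fun x : pSpan F pm S => (⟨pm x, isPSub_pSpan pm S x x.2⟩ : pSpan F pm S))
      {x : pSpan F pm S | (x : M) ∈ S} = ⊤ := by
  set H := pSpan F pm S with hH
  set pmH : H → H := fun x => (⟨pm x, isPSub_pSpan pm S x x.2⟩ : H) with hpmH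
  rw [eq_top_iff]
  intro x _
  rw [mem_pSpan_iff]
  intro H' h1 h2
  let H'' : LieSubalgebra F M := LieSubalgebra.map H.incl H'
  have hps : IsPSubalgebra F pm H'' := by
    rintro _ ⟨y, hy, rfl⟩
    exact (LieSubalgebra.mem_map _ _ _).2 ⟨pmH y, h1 y hy, rfl⟩
  have hSsub : S ⊆ H'' := by
    intro t ht
    have htH : t ∈ H := subset_pSpan pm S ht
    exact (LieSubalgebra.mem_map _ _ _).2 ⟨⟨t, htH⟩, h2 ht, rfl⟩
  have hle : H ≤ H'' := pSpan_le pm hps hSsub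
  obtain ⟨y, hy, hyx⟩ := (LieSubalgebra.mem_map _ _ _).1 (hle x.2)
  have : y = x := Subtype.ext hyx
  exact this ▸ hy

end PSpanRestrict

namespace PEnvelope
variable {p : ℕ} [Fact p.Prime] {F : Type u} [Field F] [CharP F p]
  {L : Type u} [LieRing L] [LieAlgebra F L]
variable (E : PEnvelope p F L)


/-- Any p-subalgebra containing the image is everything. -/
theorem eq_top_of (H : LieSubalgebra F E.carrier) (hp : IsPSubalgebra F E.pm H)
    (hi : Set.range E.incl ⊆ H) (x : E.carrier) : x ∈ H := by
  have h1 : pSpan F E.pm (Set.range E.incl) ≤ H := pSpan_le E.pm hp hi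
  exact h1 (E.generates ▸ LieSubalgebra.mem_top x)

/-- centralizer lemma -/
theorem central_of_forall {g : E.carrier} (h : ∀ y, ⁅g, E.incl y⁆ = 0) (x : E.carrier) :
    ⁅g, x⁆ = 0 := by
  let H : LieSubalgebra F E.carrier :=
    { LinearMap.ker (LieAlgebra.ad F E.carrier g) with
      lie_mem' := by
        intro x y hx hy
        simp only [Submodule.mem_carrier, SetLike.mem_coe, LinearMap.mem_ker,
          LieAlgebra.ad_apply] at hx hy ⊢
        rw [leibniz_lie, hx, hy, zero_lie, lie_zero, add_zero]
      }
  have hmem : ∀ z : E.carrier, z ∈ H ↔ ⁅g, z⁆ = 0 := fun z => by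
    change z ∈ LinearMap.ker (LieAlgebra.ad F E.carrier g) ↔ _
    simp [LieAlgebra.ad_apply]
  have := E.eq_top_of H ?_ ?_ x
  · exact (hmem x).1 this
  · intro z hz
    rw [hmem] at hz ⊢
    have hzg : ⁅z, g⁆ = 0 := by rw [← lie_skew, hz, neg_zero]
    have : ⁅E.pm z, g⁆ = adIter z p g := E.isPMap.ad_pow z g
    rw [← lie_skew, this, adIter_eq_zero hzg (Fact.out : p.Prime).one_lt.le, neg_zero]
  · rintro _ ⟨y, rfl⟩
    exact (hmem _).2 (h y)
/-- The image of `L` is an ideal: brackets with it stay in it. -/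
theorem lie_incl_mem (g : E.carrier) (y : L) :
    ⁅g, E.incl y⁆ ∈ (E.incl.range : LieSubalgebra F E.carrier) := by
  set R : LieSubalgebra F E.carrier := E.incl.range with hR
  let V : Submodule F E.carrier :=
    { carrier := {g | ∀ y : L, ⁅g, E.incl y⁆ ∈ R}
      add_mem' := fun {a b} ha hb y => by
        rw [add_lie]; exact R.add_mem (ha y) (hb y)
      zero_mem' := fun y => by rw [zero_lie]; exact R.zero_mem
      smul_mem' := fun c a ha y => by rw [smul_lie]; exact R.smul_mem c (ha y) }
  have hmemV : ∀ z : E.carrier, z ∈ V ↔ ∀ y : L, ⁅z, E.incl y⁆ ∈ R := fun z => Iff.rfl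
  have hiter : ∀ z : E.carrier, z ∈ V → ∀ (n : ℕ) (y : L), adIter z n (E.incl y) ∈ R := by
    intro z hz n y
    induction n with
    | zero => exact ⟨y, rfl⟩
    | succ n ih =>
      obtain ⟨y', hy'⟩ := ih
      rw [adIter_succ, ← hy']
      exact hz y'
  let H : LieSubalgebra F E.carrier :=
    { V with
      lie_mem' := by
        intro a b ha hb
        intro y
        rw [lie_lie]
        obtain ⟨y1, hy1⟩ := hb y
        obtain ⟨y2, hy2⟩ := ha y
        refine R.sub_mem ?_ ?_
        · rw [← hy1]; exact ha y1
        · rw [← hy2]; exact hb y2 }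
  have hmem : ∀ z : E.carrier, z ∈ H ↔ ∀ y : L, ⁅z, E.incl y⁆ ∈ R := fun z => Iff.rfl
  have := E.eq_top_of H ?_ ?_ g
  · exact (hmem g).1 this y
  · intro z hz
    rw [hmem] at hz ⊢
    intro y
    rw [E.isPMap.ad_pow z (E.incl y)]
    exact hiter z hz p y
  · rintro _ ⟨w, rfl⟩ y
    exact ⟨⁅w, y⁆, E.incl.map_lie w y⟩

/-- All brackets in the envelope land in the image of `L`. -/
theorem lie_mem_range (g x : E.carrier) :
    ⁅g, x⁆ ∈ (E.incl.range : LieSubalgebra F E.carrier) := by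
  set R : LieSubalgebra F E.carrier := E.incl.range with hR
  let V : Submodule F E.carrier :=
    { carrier := {g | ∀ x : E.carrier, ⁅g, x⁆ ∈ R}
      add_mem' := fun {a b} ha hb x => by
        rw [add_lie]; exact R.add_mem (ha x) (hb x)
      zero_mem' := fun x => by rw [zero_lie]; exact R.zero_mem
      smul_mem' := fun c a ha x => by rw [smul_lie]; exact R.smul_mem c (ha x) }
  let H : LieSubalgebra F E.carrier :=
    { V with
      lie_mem' := by
        intro a b ha hb x
        rw [lie_lie]
        exact R.sub_mem (ha ⁅b, x⁆) (hb ⁅a, x⁆) }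
  have hmem : ∀ z : E.carrier, z ∈ H ↔ ∀ x : E.carrier, ⁅z, x⁆ ∈ R := fun z => Iff.rfl
  have hiter : ∀ z : E.carrier, z ∈ H → ∀ (n : ℕ) (x : E.carrier), 1 ≤ n → adIter z n x ∈ R := by
    intro z hz n x hn
    obtain ⟨m, rfl⟩ := Nat.exists_eq_add_of_le hn
    rw [add_comm, adIter_succ]
    exact hz (adIter z m x)
  have := E.eq_top_of H ?_ ?_ g
  · exact (hmem g).1 this x
  · intro z hz
    rw [hmem] at hz ⊢
    intro x
    rw [E.isPMap.ad_pow z x]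
    exact hiter z hz p x (Fact.out : p.Prime).one_lt.le
  · rintro _ ⟨w, rfl⟩ x
    rw [← lie_skew]
    exact R.neg_mem (E.lie_incl_mem x w)

theorem mem_center_iff' {g : E.carrier} :
    g ∈ LieAlgebra.center F E.carrier ↔ ∀ y : L, ⁅g, E.incl y⁆ = 0 := by
  rw [LieAlgebra.center, LieModule.mem_maxTrivSubmodule]
  constructor
  · intro h y
    rw [← lie_skew, h (E.incl y), neg_zero]
  · intro h x
    rw [← lie_skew, E.central_of_forall h x, neg_zero]

theorem incl_center_mem {z : L} (hz : z ∈ LieAlgebra.center F L) :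
    E.incl z ∈ LieAlgebra.center F E.carrier := by
  rw [mem_center_iff']
  intro y
  rw [← LieHom.map_lie]
  have : ⁅z, y⁆ = 0 := by
    rw [← lie_skew, (LieModule.mem_maxTrivSubmodule F L L z).1 hz y, neg_zero]
  rw [this, map_zero]

/-- If some central element is outside the image of `L`, there is a strictly smaller envelope. -/
theorem exists_smaller [FiniteDimensional F E.carrier] {z : E.carrier}
    (hz : z ∈ LieAlgebra.center F E.carrier) (hznot : z ∉ Set.range E.incl) :
    ∃ E' : PEnvelope p F L, FiniteDimensional F E'.carrier ∧
      Module.finrank F E'.carrier < Module.finrank F E.carrier := by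
  classical
  set R : LieSubalgebra F E.carrier := E.incl.range with hRdef
  have hRrange : ∀ x : E.carrier, x ∈ R ↔ x ∈ Set.range E.incl := by
    intro x; constructor
    · rintro ⟨y, rfl⟩; exact ⟨y, rfl⟩
    · rintro ⟨y, rfl⟩; exact ⟨y, rfl⟩
  set Rsub : Submodule F E.carrier := R.toSubmodule with hRsub
  set S : Submodule F E.carrier := Submodule.span F {z} with hS
  have hzS : z ∈ S := Submodule.mem_span_singleton_self z
  have hzne : z ≠ 0 := by
    intro h; exact hznot ⟨0, by rw [h]; exact E.incl.map_zero⟩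
  have hRS : Rsub ⊓ S = ⊥ := by
    rw [eq_bot_iff]
    rintro x ⟨hxR, hxS⟩
    obtain ⟨c, rfl⟩ := Submodule.mem_span_singleton.1 hxS
    rcases eq_or_ne c 0 with h | h
    · simp [h]
    · exfalso
      apply hznot
      have : z = c⁻¹ • (c • z) := by rw [smul_smul, inv_mul_cancel₀ h, one_smul]
      rw [← hRrange]
      rw [this]
      exact Rsub.smul_mem _ hxR
  obtain ⟨U, hU⟩ := Submodule.exists_isCompl (Rsub ⊔ S)
  set Ksub : Submodule F E.carrier := Rsub ⊔ U with hK
  have hKS : IsCompl Ksub S := by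
    constructor
    · rw [disjoint_iff]
      rw [eq_bot_iff]
      rintro x ⟨hxK, hxS⟩
      obtain ⟨r, hr, u, hu, rfl⟩ := Submodule.mem_sup.1 hxK
      have huTU : u ∈ (Rsub ⊔ S) ⊓ U := by
        constructor
        · have : u = (r + u) - r := by abel
          rw [this]
          exact Submodule.sub_mem _ (Submodule.mem_sup.2 ⟨0, Submodule.zero_mem _, r + u,
            (by exact hxS : (r+u) ∈ S), by abel⟩) (Submodule.mem_sup_left hr)
        · exact hu
      have hu0 : u = 0 := by
        have := hU.disjoint
        rw [disjoint_iff, eq_bot_iff] at this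
        exact (Submodule.mem_bot F).1 (this huTU)
      subst hu0
      have : r + 0 ∈ Rsub ⊓ S := ⟨by simpa using hr, hxS⟩
      rw [hRS] at this
      exact (Submodule.mem_bot F).1 this
    · rw [codisjoint_iff]
      rw [eq_top_iff]
      have h1 : Rsub ⊔ S ⊔ U = ⊤ := by
        rw [← codisjoint_iff.1 hU.codisjoint]
      calc (⊤ : Submodule F E.carrier) = Rsub ⊔ S ⊔ U := h1.symm
        _ ≤ Ksub ⊔ S := by
            rw [hK]
            rw [sup_assoc, sup_comm S U, ← sup_assoc]
  set π : E.carrier →ₗ[F] E.carrier :=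
    Ksub.subtype ∘ₗ Ksub.projectionOnto S hKS with hπ
  have hπK : ∀ x ∈ Ksub, π x = x := by
    intro x hx
    have := Submodule.projectionOnto_apply_left hKS ⟨x, hx⟩
    simp only [hπ, LinearMap.comp_apply, Submodule.subtype_apply]
    rw [this]
  have hπmem : ∀ x, π x ∈ Ksub := fun x => (Ksub.projectionOnto S hKS x).2
  have hsubS : ∀ x, x - π x ∈ S := by
    intro x
    have h := Submodule.projection_add_projection_eq_self hKS x
    have : x - π x = (S.projectionOnto Ksub hKS.symm x : E.carrier) := by
      exact sub_eq_of_eq_add' h.symm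
    rw [this]
    exact (S.projectionOnto Ksub hKS.symm x).2
  have hScentral : ∀ w ∈ S, ∀ x : E.carrier, ⁅w, x⁆ = 0 := by
    intro w hw x
    obtain ⟨c, rfl⟩ := Submodule.mem_span_singleton.1 hw
    have hzc : ⁅z, x⁆ = 0 := by
      rw [← lie_skew, (LieModule.mem_maxTrivSubmodule F _ _ z).1 hz x, neg_zero]
    rw [smul_lie, hzc, smul_zero]
  set pm2 : E.carrier → E.carrier := fun x => π (E.pm x) with hpm2
  have hlieR : ∀ x y : E.carrier, ⁅x, y⁆ ∈ Rsub := fun x y => E.lie_mem_range x y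
  have hRK : Rsub ≤ Ksub := le_sup_left
  have hπR : ∀ x ∈ Rsub, π x = x := fun x hx => hπK x (hRK hx)
  have hpm2_map : IsPMap p F E.carrier pm2 := by
    constructor
    · intro a x
      have h1 : π (E.pm a) = E.pm a - (E.pm a - π (E.pm a)) := by abel
      rw [hpm2]
      dsimp only
      rw [h1, sub_lie, hScentral _ (hsubS (E.pm a)) x, sub_zero]
      exact E.isPMap.ad_pow a x
    · intro c a
      rw [hpm2]
      dsimp only
      rw [E.isPMap.smul_pow c a, map_smul]
    · intro a b
      obtain ⟨s, hs1, hs2⟩ := E.isPMap.add_pow a b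
      have hmem : ∀ k : Fin (p - 1), s k ∈ Rsub := jacobson_mem_of_lie_le p hlieR hs1
      refine ⟨s, hs1, ?_⟩
      rw [hpm2]
      dsimp only
      rw [hs2, map_add, map_add, map_sum]
      congr 1
      exact Finset.sum_congr rfl fun j _ => hπR _ (hmem j)
  -- the Lie subalgebra on `Ksub`
  set Klie : LieSubalgebra F E.carrier :=
    { Ksub with lie_mem' := fun {x y} _ _ => hRK (hlieR x y) } with hKlie
  have hKliePSub : IsPSubalgebra F pm2 Klie := fun x _ => hπmem (E.pm x)
  set H : LieSubalgebra F E.carrier := pSpan F pm2 (Set.range E.incl) with hH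
  have hHK : H ≤ Klie := by
    apply pSpan_le pm2 hKliePSub
    rintro _ ⟨y, rfl⟩
    exact hRK ⟨y, rfl⟩
  -- build the new envelope
  set pmH : H → H := fun x => (⟨pm2 x, isPSub_pSpan pm2 (Set.range E.incl) x x.2⟩ : H)
    with hpmH
  have hpmHmap : IsPMap p F H pmH := isPMap_restrict p hpm2_map (isPSub_pSpan pm2 _)
  set incl' : L →ₗ⁅F⁆ H :=
    { toFun := fun y => ⟨E.incl y, subset_pSpan pm2 _ ⟨y, rfl⟩⟩
      map_add' := fun x y => Subtype.ext (E.incl.map_add x y)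
      map_smul' := fun c x => Subtype.ext (E.incl.map_smul c x)
      map_lie' := by
        intro x y
        apply Subtype.ext
        show E.incl ⁅x, y⁆ = ⁅(E.incl x : E.carrier), E.incl y⁆
        exact E.incl.map_lie x y } with hincl'
  have hinj : Function.Injective incl' := by
    intro x y h
    apply E.injective
    exact congrArg Subtype.val h
  have hgen : pSpan F pmH (Set.range incl') = ⊤ := by
    have hset : Set.range incl' = {x : H | (x : E.carrier) ∈ Set.range E.incl} := by
      ext x
      constructor
      · rintro ⟨y, rfl⟩; exact ⟨y, rfl⟩
      · rintro ⟨y, hy⟩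
        exact ⟨y, Subtype.ext hy⟩
    rw [hset]
    exact pSpan_restrict_top pm2 (Set.range E.incl)
  refine ⟨⟨H, pmH, hpmHmap, incl', hinj, hgen⟩, inferInstance, ?_⟩
  have hzK : z ∉ Ksub := by
    intro hzk
    have : z ∈ Ksub ⊓ S := ⟨hzk, hzS⟩
    rw [disjoint_iff.1 hKS.disjoint] at this
    exact hzne ((Submodule.mem_bot F).1 this)
  have hKtop : Ksub ≠ ⊤ := fun h => hzK (h ▸ Submodule.mem_top)
  have h1 : Module.finrank F H ≤ Module.finrank F Ksub := by
    exact Submodule.finrank_mono hHK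
  have h2 : Module.finrank F Ksub < Module.finrank F E.carrier :=
    Submodule.finrank_lt hKtop
  exact lt_of_le_of_lt h1 h2

end PEnvelope

namespace PEnvelope
attribute [local instance 100] LieRing.ofAssociativeRing
section ToEnd
variable (p : ℕ) [Fact p.Prime] (F : Type u) [Field F] [CharP F p]
  (L : Type u) [LieRing L] [LieAlgebra F L]

/-- The common `p`-span of `ad L` inside `End L`. -/
noncomputable def adSpan : LieSubalgebra F (Module.End F L) :=
  pSpan F (fun f => f ^ p) (Set.range (LieAlgebra.ad F L))

variable {p F L} (E : PEnvelope p F L)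

theorem lie_incl_mem' (g : E.carrier) (y : L) :
    ⁅g, E.incl y⁆ ∈ LinearMap.range E.incl.toLinearMap := by
  obtain ⟨y', hy'⟩ := E.lie_incl_mem g y
  exact LinearMap.mem_range.2 ⟨y', hy'⟩

/-- `e : L ≃ range incl`. -/
noncomputable def inclEquiv : L ≃ₗ[F] LinearMap.range E.incl.toLinearMap :=
  LinearEquiv.ofInjective E.incl.toLinearMap E.injective

theorem incl_inclEquiv_symm (w : LinearMap.range E.incl.toLinearMap) :
    E.incl (E.inclEquiv.symm w) = w := by
  have h := E.inclEquiv.apply_symm_apply w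
  have : ((E.inclEquiv (E.inclEquiv.symm w)) : E.carrier) = (w : E.carrier) := by rw [h]
  rw [← this]
  rfl

/-- The auxiliary endomorphism of `L` induced by `g`. -/
noncomputable def toEndAux (g : E.carrier) : L →ₗ[F] L :=
  E.inclEquiv.symm.toLinearMap ∘ₗ
    (((LieAlgebra.ad F E.carrier g) ∘ₗ E.incl.toLinearMap).codRestrict
      (LinearMap.range E.incl.toLinearMap) (fun y => E.lie_incl_mem' g y))

theorem incl_toEndAux (g : E.carrier) (y : L) :
    E.incl (E.toEndAux g y) = ⁅g, E.incl y⁆ := by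
  rw [toEndAux]
  simp only [LinearMap.comp_apply, LinearEquiv.coe_coe]
  rw [incl_inclEquiv_symm]
  erw [LinearMap.codRestrict_apply]
  simp [LieAlgebra.ad_apply]

/-- The representation `E.carrier → End L`. -/
noncomputable def toEnd : E.carrier →ₗ[F] Module.End F L where
  toFun g := E.toEndAux g
  map_add' g h := by
    apply LinearMap.ext
    intro y
    apply E.injective
    rw [LinearMap.add_apply, map_add E.incl, incl_toEndAux, incl_toEndAux, incl_toEndAux, add_lie]
  map_smul' c g := by
    apply LinearMap.ext
    intro y
    apply E.injective
    rw [RingHom.id_apply, LinearMap.smul_apply, map_smul E.incl, incl_toEndAux, incl_toEndAux,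
      smul_lie]

theorem incl_toEnd (g : E.carrier) (y : L) : E.incl (E.toEnd g y) = ⁅g, E.incl y⁆ :=
  E.incl_toEndAux g y

theorem toEnd_lie (g h : E.carrier) : E.toEnd ⁅g, h⁆ = ⁅E.toEnd g, E.toEnd h⁆ := by
  apply LinearMap.ext
  intro y
  apply E.injective
  rw [incl_toEnd, Ring.lie_def, LinearMap.sub_apply, Module.End.mul_apply, Module.End.mul_apply,
    map_sub E.incl, incl_toEnd, incl_toEnd, incl_toEnd, incl_toEnd, lie_lie]

theorem incl_toEnd_pow (g : E.carrier) (n : ℕ) (y : L) :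
    E.incl ((E.toEnd g ^ n) y) = adIter g n (E.incl y) := by
  induction n with
  | zero => rfl
  | succ n ih =>
    rw [pow_succ', Module.End.mul_apply, incl_toEnd, ih, adIter_succ]

theorem toEnd_pm (g : E.carrier) : E.toEnd (E.pm g) = (E.toEnd g) ^ p := by
  apply LinearMap.ext
  intro y
  apply E.injective
  rw [incl_toEnd, incl_toEnd_pow, E.isPMap.ad_pow]

theorem toEnd_incl (x : L) : E.toEnd (E.incl x) = LieAlgebra.ad F L x := by
  apply LinearMap.ext
  intro y
  apply E.injective
  rw [incl_toEnd, ← LieHom.map_lie, LieAlgebra.ad_apply]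

theorem ker_toEnd :
    LinearMap.ker E.toEnd = (LieAlgebra.center F E.carrier : LieSubmodule F E.carrier E.carrier) := by
  ext g
  rw [LinearMap.mem_ker]
  constructor
  · intro h
    show g ∈ LieAlgebra.center F E.carrier
    rw [mem_center_iff']
    intro y
    rw [← incl_toEnd, h]
    exact E.incl.map_zero
  · intro h
    replace h : ∀ y : L, ⁅g, E.incl y⁆ = 0 :=
      E.mem_center_iff'.1 (by exact h)
    apply LinearMap.ext
    intro y
    apply E.injective
    show E.incl (E.toEnd g y) = E.incl ((0 : Module.End F L) y)
    rw [incl_toEnd, h y, LinearMap.zero_apply, map_zero E.incl]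

theorem range_toEnd : LinearMap.range E.toEnd = ((adSpan p F L : LieSubalgebra F (Module.End F L)) :
    Submodule F (Module.End F L)) := by
  apply le_antisymm
  · rintro _ ⟨g, rfl⟩
    let W : LieSubalgebra F E.carrier :=
      { Submodule.comap E.toEnd (adSpan p F L : Submodule F (Module.End F L)) with
        lie_mem' := by
          intro x y hx hy
          simp only [Submodule.mem_carrier, Submodule.mem_comap, SetLike.mem_coe] at hx hy ⊢
          rw [toEnd_lie]
          exact (adSpan p F L).lie_mem hx hy }
    have hmem : ∀ x : E.carrier, x ∈ W ↔ E.toEnd x ∈ adSpan p F L := fun x => Iff.rfl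
    have := E.eq_top_of W ?_ ?_ g
    · exact (hmem g).1 this
    · intro x hx
      rw [hmem] at hx ⊢
      rw [toEnd_pm]
      exact isPSub_pSpan _ _ _ hx
    · rintro _ ⟨x, rfl⟩
      rw [SetLike.mem_coe, hmem, toEnd_incl]
      exact subset_pSpan _ _ ⟨x, rfl⟩
  · have : adSpan p F L ≤
        { LinearMap.range E.toEnd with
          lie_mem' := by
            rintro _ _ ⟨g, rfl⟩ ⟨h, rfl⟩
            exact ⟨⁅g, h⁆, E.toEnd_lie g h⟩ } := by
      apply pSpan_le
      · rintro _ ⟨g, rfl⟩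
        exact ⟨E.pm g, E.toEnd_pm g⟩
      · rintro _ ⟨x, rfl⟩
        exact ⟨E.incl x, E.toEnd_incl x⟩
    exact this

theorem finrank_carrier_eq [FiniteDimensional F E.carrier] [FiniteDimensional F L] :
    Module.finrank F E.carrier =
      Module.finrank F ((adSpan p F L : LieSubalgebra F (Module.End F L)) :
          Submodule F (Module.End F L)) +
        Module.finrank F ((LieAlgebra.center F E.carrier :
          LieSubmodule F E.carrier E.carrier) : Submodule F E.carrier) := by
  have h := LinearMap.finrank_range_add_finrank_ker E.toEnd
  rw [E.range_toEnd, E.ker_toEnd] at h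
  exact h.symm

end ToEnd

section Final
variable {p : ℕ} [Fact p.Prime] {F : Type u} [Field F] [CharP F p]
  {L : Type u} [LieRing L] [LieAlgebra F L] (E : PEnvelope p F L)

theorem center_eq_map (hc : ∀ x ∈ LieAlgebra.center F E.carrier, x ∈ Set.range E.incl) :
    ((LieAlgebra.center F E.carrier : LieSubmodule F E.carrier E.carrier) :
        Submodule F E.carrier) =
      Submodule.map E.incl.toLinearMap
        ((LieAlgebra.center F L : LieSubmodule F L L) : Submodule F L) := by
  apply le_antisymm
  · intro x hx
    have hx' : x ∈ LieAlgebra.center F E.carrier := hx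
    obtain ⟨y, rfl⟩ := hc x hx'
    refine Submodule.mem_map.2 ⟨y, ?_, rfl⟩
    show y ∈ LieAlgebra.center F L
    rw [LieAlgebra.center, LieModule.mem_maxTrivSubmodule]
    intro w
    apply E.injective
    rw [E.incl.map_lie, map_zero E.incl]
    have := E.mem_center_iff'.1 hx' w
    rw [← lie_skew, this, neg_zero]
  · rintro _ ⟨y, hy, rfl⟩
    exact E.incl_center_mem (by exact hy)

theorem finrank_center_eq (hc : ∀ x ∈ LieAlgebra.center F E.carrier, x ∈ Set.range E.incl) :
    Module.finrank F ((LieAlgebra.center F E.carrier :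
        LieSubmodule F E.carrier E.carrier) : Submodule F E.carrier) =
      Module.finrank F ((LieAlgebra.center F L : LieSubmodule F L L) : Submodule F L) := by
  rw [E.center_eq_map hc]
  exact (LinearEquiv.finrank_eq
    (Submodule.equivMapOfInjective E.incl.toLinearMap E.injective _)).symm

theorem finrank_center_le (E' : PEnvelope p F L) [FiniteDimensional F E'.carrier] :
    Module.finrank F ((LieAlgebra.center F L : LieSubmodule F L L) : Submodule F L) ≤
      Module.finrank F ((LieAlgebra.center F E'.carrier :
        LieSubmodule F E'.carrier E'.carrier) : Submodule F E'.carrier) := by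
  have hle : Submodule.map E'.incl.toLinearMap
      ((LieAlgebra.center F L : LieSubmodule F L L) : Submodule F L) ≤
      ((LieAlgebra.center F E'.carrier :
        LieSubmodule F E'.carrier E'.carrier) : Submodule F E'.carrier) := by
    rintro _ ⟨y, hy, rfl⟩
    exact E'.incl_center_mem (by exact hy)
  calc Module.finrank F ((LieAlgebra.center F L : LieSubmodule F L L) : Submodule F L)
      = Module.finrank F (Submodule.map E'.incl.toLinearMap
          ((LieAlgebra.center F L : LieSubmodule F L L) : Submodule F L)) :=
        LinearEquiv.finrank_eq (Submodule.equivMapOfInjective E'.incl.toLinearMap E'.injective _)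
    _ ≤ _ := Submodule.finrank_mono hle

end Final

end PEnvelope

/-- A finite-dimensional `p`-envelope `(G, [p], i)` of a finite-dimensional
Lie algebra `L` is minimal if and only if the center of `G` is contained in `i(L)`. -/
theorem pEnvelope_isMinimal_iff_center_le (p : ℕ) [Fact p.Prime]
    (F : Type u) [Field F] [CharP F p]
    (L : Type u) [LieRing L] [LieAlgebra F L] [FiniteDimensional F L]
    (E : PEnvelope p F L) [FiniteDimensional F E.carrier] :
    E.IsMinimal ↔ ∀ x ∈ LieAlgebra.center F E.carrier, x ∈ Set.range E.incl := by
  constructor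
  · intro hmin x hx
    by_contra hnx
    obtain ⟨E'', hfin, hlt⟩ := E.exists_smaller hx hnx
    have := hmin.2 E'' hfin
    omega
  · intro hc
    refine ⟨inferInstance, ?_⟩
    intro E' hE'
    haveI := hE'
    have h1 := E.finrank_carrier_eq
    have h2 := E'.finrank_carrier_eq
    have h3 := E.finrank_center_eq hc
    have h4 := PEnvelope.finrank_center_le E'
    omega
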